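/- Let φ be a Schwartz function on ℝ. Then the Fourier transform of the absolute value |φ| is integrable on ℝ. More precisely, writing N for the (discrete) set of points s where φ(s) = 0 and φ'(s) ≠ 0, one has ∑_{s ∈ N} |φ'(s)| ≤ ∫_ℝ |φ''(s)| ds < ∞, and |(ℱ|φ|)(ξ)| ≲ |ξ|^{-2} for large |ξ|. -/

import Mathlib

open MeasureTheory

section Aux
open Set FourierTransform Real

variable (φ : SchwartzMap ℝ ℝ)


lemma my_deriv_eq : deriv ⇑φ = ⇑(SchwartzMap.derivCLM ℝ ℝ φ) :=
  funext fun x => (SchwartzMap.derivCLM_apply ℝ φ x).symm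

lemma phi'_tendsto : Filter.Tendsto ⇑(SchwartzMap.derivCLM ℝ ℝ φ) Filter.atTop (nhds 0) := by
  have h := (SchwartzMap.toZeroAtInfty (SchwartzMap.derivCLM ℝ ℝ φ)).zero_at_infty'
  exact h.mono_left (by rw [cocompact_eq_atBot_atTop]; exact le_sup_right)

-- |φ'(s)| ≤ ∫_{Ioi s} |φ''|
lemma tail_bound (s : ℝ) :
    |SchwartzMap.derivCLM ℝ ℝ φ s| ≤ ∫ x in Ioi s, |SchwartzMap.derivCLM ℝ ℝ (SchwartzMap.derivCLM ℝ ℝ φ) x| := by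
  set ψ := SchwartzMap.derivCLM ℝ ℝ φ
  set ψ' := SchwartzMap.derivCLM ℝ ℝ ψ
  have hder : ∀ x ∈ Ici s, HasDerivAt ⇑ψ (ψ' x) x := by
    intro x _
    have := ψ.differentiableAt (x := x)
    simpa [ψ', SchwartzMap.derivCLM_apply] using this.hasDerivAt
  have h := integral_Ioi_of_hasDerivAt_of_tendsto' hder
    ((ψ'.integrable).integrableOn) (phi'_tendsto φ)
  have : |ψ s| = |∫ x in Ioi s, ψ' x| := by rw [h]; simp
  rw [this]
  exact norm_integral_le_integral_norm (μ := volume.restrict (Ioi s)) ψ'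

lemma sorted_sum_le : ∀ (l : List ℝ), l.Pairwise (· < ·) → (∀ s ∈ l, φ s = 0) →
    ∀ a : ℝ, (∀ s ∈ l, a ≤ s) →
    (l.map (fun s => |SchwartzMap.derivCLM ℝ ℝ φ s|)).sum ≤
      ∫ x in Ici a, |SchwartzMap.derivCLM ℝ ℝ (SchwartzMap.derivCLM ℝ ℝ φ) x| := by
  set ψ := SchwartzMap.derivCLM ℝ ℝ φ with hψ
  set ψ' := SchwartzMap.derivCLM ℝ ℝ ψ with hψ'
  have habs : Integrable (fun x => |ψ' x|) volume := (ψ'.integrable).abs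
  have hnn : ∀ x, 0 ≤ |ψ' x| := fun x => abs_nonneg _
  intro l
  induction l with
  | nil =>
    intro _ _ a _
    simpa using setIntegral_nonneg measurableSet_Ici (fun x _ => hnn x)
  | cons s l IH =>
    intro hsort hzero a ha
    rcases List.pairwise_cons.1 hsort with ⟨hslt, hsort'⟩
    have has : a ≤ s := ha s (List.mem_cons_self)
    match l with
    | [] =>
      simp only [List.map_cons, List.map_nil, List.sum_cons, List.sum_nil, add_zero]
      refine (tail_bound φ s).trans ?_
      refine setIntegral_mono_set habs.integrableOn (Filter.Eventually.of_forall fun x => hnn x) ?_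
      exact Filter.Eventually.of_forall fun x hx => lt_of_le_of_lt has hx |>.le
    | t :: l' =>
      have hst : s < t := hslt t (List.mem_cons_self)
      -- Rolle
      obtain ⟨c, hc, hc0⟩ := exists_deriv_eq_zero hst (φ.continuous.continuousOn)
        ((hzero s (by simp)).trans (hzero t (by simp)).symm)
      rw [my_deriv_eq φ] at hc0
      have hsc : s ≤ c := hc.1.le
      -- |ψ s| ≤ ∫_{Icc a c} |ψ'|
      have hb1 : |ψ s| ≤ ∫ x in Icc a c, |ψ' x| := by
        have hftc : ∫ x in s..c, ψ' x = ψ c - ψ s := by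
          refine intervalIntegral.integral_eq_sub_of_hasDerivAt (fun x _ => ?_)
            (ψ'.integrable.intervalIntegrable)
          have := ψ.differentiableAt (x := x)
          simpa [hψ', SchwartzMap.derivCLM_apply] using this.hasDerivAt
        have h1 : |ψ s| = |∫ x in s..c, ψ' x| := by rw [hftc, hc0]; simp
        rw [h1]
        refine (intervalIntegral.abs_integral_le_integral_abs hsc).trans ?_
        rw [intervalIntegral.integral_of_le hsc]
        refine setIntegral_mono_set habs.integrableOn
          (Filter.Eventually.of_forall fun x => hnn x)
          (Filter.Eventually.of_forall fun x hx => ?_)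
        exact ⟨has.trans hx.1.le, hx.2⟩
      -- IH on (t :: l') with a := c
      have hIH := IH hsort' (fun x hx => hzero x (List.mem_cons_of_mem s hx)) c
        (fun x hx => by
          rcases List.mem_cons.1 hx with rfl | hx'
          · exact hc.2.le
          · exact (hc.2.trans (List.pairwise_cons.1 hsort' |>.1 x hx')).le)
      -- split the integral
      have hsplit : (∫ x in Icc a c, |ψ' x|) + ∫ x in Ioi c, |ψ' x|
          = ∫ x in Ici a, |ψ' x| := by
        rw [← setIntegral_union (by simp [Set.disjoint_left]) measurableSet_Ioi
          habs.integrableOn habs.integrableOn,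
          Set.Icc_union_Ioi_eq_Ici (has.trans hsc)]
      have hIci : (∫ x in Ici c, |ψ' x|) = ∫ x in Ioi c, |ψ' x| :=
        integral_Ici_eq_integral_Ioi
      simp only [List.map_cons, List.sum_cons] at hIH ⊢
      calc |ψ s| + (|ψ t| + (l'.map (fun s => |ψ s|)).sum)
          ≤ (∫ x in Icc a c, |ψ' x|) + ∫ x in Ici c, |ψ' x| := add_le_add hb1 hIH
        _ = ∫ x in Ici a, |ψ' x| := by rw [hIci]; exact hsplit

lemma part3 : (∑' s : {s : ℝ // φ s = 0 ∧ deriv (⇑φ) s ≠ 0}, |deriv (⇑φ) (s : ℝ)|) ≤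
    (∫ s : ℝ, |deriv (deriv (⇑φ)) s|) := by
  set ψ := SchwartzMap.derivCLM ℝ ℝ φ with hψ
  set ψ' := SchwartzMap.derivCLM ℝ ℝ ψ with hψ'
  have hd1 : deriv ⇑φ = ⇑ψ := my_deriv_eq φ
  have hd2 : deriv (deriv ⇑φ) = ⇑ψ' := by rw [hd1]; exact my_deriv_eq ψ
  have habs : Integrable (fun x => |ψ' x|) volume := (ψ'.integrable).abs
  have hRHS : 0 ≤ ∫ s : ℝ, |deriv (deriv ⇑φ) s| :=
    integral_nonneg fun x => abs_nonneg _
  by_cases hsum : Summable (fun s : {s : ℝ // φ s = 0 ∧ deriv (⇑φ) s ≠ 0} =>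
      |deriv (⇑φ) (s : ℝ)|)
  · refine Summable.tsum_le_of_sum_le hsum fun F => ?_
    rw [hd2]
    -- pass to the image finset in ℝ
    have hinj : Set.InjOn Subtype.val (F : Set {s : ℝ // φ s = 0 ∧ deriv (⇑φ) s ≠ 0}) :=
      Subtype.val_injective.injOn
    rw [← Finset.sum_image (f := fun s : ℝ => |deriv (⇑φ) s|) (g := Subtype.val)
      (fun x hx y hy h => hinj hx hy h)]
    set G := F.image Subtype.val with hG
    have hGzero : ∀ s ∈ G, φ s = 0 := by
      intro s hs
      rcases Finset.mem_image.1 hs with ⟨y, _, rfl⟩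
      exact y.2.1
    set l := G.sort (· ≤ ·) with hl
    have hsort : l.Pairwise (· < ·) := G.sortedLT_sort.pairwise
    have hsum_eq : (∑ x ∈ G, |deriv (⇑φ) x|) = (l.map (fun s => |ψ s|)).sum := by
      rw [hd1]
      rw [Finset.sum_eq_multiset_sum, ← Finset.sort_eq G (· ≤ ·), ← hl]
      simp [Multiset.map_coe]
    rw [hsum_eq]
    match l, hsort with
    | [], _ => simpa using hRHS.trans_eq (by rw [hd2])
    | s :: rest, hsort =>
      have hmem : ∀ x ∈ s :: rest, φ x = 0 := by
        intro x hx
        exact hGzero x (by rw [← Finset.mem_sort (· ≤ ·)]; exact hl ▸ hx)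
      have hub : ∀ x ∈ s :: rest, s ≤ x := by
        intro x hx
        rcases List.mem_cons.1 hx with rfl | hx'
        · exact le_rfl
        · exact ((List.pairwise_cons.1 hsort).1 x hx').le
      refine (sorted_sum_le φ (s :: rest) hsort hmem s hub).trans ?_
      exact setIntegral_le_integral habs (Filter.Eventually.of_forall fun x => abs_nonneg _)
  · rw [tsum_eq_zero_of_not_summable hsum]
    exact hRHS


lemma abs_trick (a b c : ℝ) :
    |(|a| - 2*|b| + |c|)| ≤ (|a| - 2*|b| + |c|) + 2*|a - 2*b + c| := by
  have h1 : |a + c| ≤ |a| + |c| := abs_add_le a c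
  have h2 : |2*b| - |a + c| ≤ |2*b - (a+c)| := abs_sub_abs_le_abs_sub _ _
  have h3 : |2*b - (a+c)| = |a - 2*b + c| := by
    rw [show 2*b - (a+c) = -(a - 2*b + c) by ring, abs_neg]
  have h4 : |2*b| = 2*|b| := by rw [abs_mul]; norm_num
  rcases abs_cases (|a| - 2*|b| + |c|) with ⟨he, _⟩ | ⟨he, _⟩ <;>
    linarith [abs_nonneg (a - 2*b + c)]

lemma sd_pointwise (φ : SchwartzMap ℝ ℝ) (Cc : ℝ)
    (hCc : ∀ u, |SchwartzMap.derivCLM ℝ ℝ (SchwartzMap.derivCLM ℝ ℝ φ) u| * (1 + u^2) ≤ Cc)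
    (δ x : ℝ) (hδ : |δ| ≤ 1/2) :
    |φ (x+δ) - 2*φ x + φ (x-δ)| ≤ δ^2 * (3*Cc * (1+x^2)⁻¹) := by
  set ψ := SchwartzMap.derivCLM ℝ ℝ φ with hψdef
  set ψ' := SchwartzMap.derivCLM ℝ ℝ ψ with hψ'def
  set M := 3*Cc * (1+x^2)⁻¹ with hMdef
  have hCc0 : 0 ≤ Cc := le_trans (by positivity) (hCc 0)
  -- majorant on [x-1, x+1]
  have hM : ∀ u ∈ Icc (x-1) (x+1), |ψ' u| ≤ M := by
    intro u hu
    have hux : (x - u)^2 ≤ 1 := by nlinarith [hu.1, hu.2]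
    have h3 : 1 + x^2 ≤ 3 * (1 + u^2) := by nlinarith [sq_nonneg (x - u), sq_nonneg u]
    rw [hMdef, mul_comm (3*Cc), ← div_eq_inv_mul, le_div_iff₀ (by positivity)]
    nlinarith [hCc u, abs_nonneg (ψ' u), sq_nonneg u]
  -- ψ is M-Lipschitz on [x-1, x+1]
  have hψderiv : ∀ u ∈ Icc (x-1) (x+1), HasDerivWithinAt (⇑ψ) (ψ' u) (Icc (x-1) (x+1)) u := by
    intro u _
    have : HasDerivAt (⇑ψ) (ψ' u) u := by
      simpa [hψ'def, SchwartzMap.derivCLM_apply] using (ψ.differentiableAt (x := u)).hasDerivAt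
    exact this.hasDerivWithinAt
  have hlip : ∀ p ∈ Icc (x-1) (x+1), ∀ q ∈ Icc (x-1) (x+1), |ψ p - ψ q| ≤ M * |p - q| := by
    intro p hp q hq
    have := (convex_Icc (x-1) (x+1)).norm_image_sub_le_of_norm_hasDerivWithin_le
      hψderiv (fun u hu => by simpa using hM u hu) hq hp
    simpa [Real.norm_eq_abs] using this
  -- second difference via the function h t = φ (x+t) - φ (x+t-δ)
  set h : ℝ → ℝ := fun t => φ (x + t) - φ (x + t - δ) with hhdef
  have hmem : ∀ t ∈ uIcc (0:ℝ) δ, |t| ≤ |δ| := by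
    intro t ht
    rcases le_total (0:ℝ) δ with h0 | h0
    · rw [uIcc_of_le h0] at ht
      rw [abs_of_nonneg ht.1, abs_of_nonneg h0]; exact ht.2
    · rw [uIcc_of_ge h0] at ht
      rw [abs_of_nonpos ht.2, abs_of_nonpos h0]; linarith [ht.1]
  have hhderiv : ∀ t ∈ uIcc (0:ℝ) δ,
      HasDerivWithinAt h (ψ (x + t) - ψ (x + t - δ)) (uIcc (0:ℝ) δ) t := by
    intro t _
    have h1 : HasDerivAt (⇑φ) (ψ (x + t)) (x + t) := by
      simpa [hψdef, SchwartzMap.derivCLM_apply] using (φ.differentiableAt (x := x + t)).hasDerivAt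
    have h2 : HasDerivAt (⇑φ) (ψ (x + t - δ)) (x - δ + t) := by
      rw [show x - δ + t = x + t - δ by ring]
      simpa [hψdef, SchwartzMap.derivCLM_apply] using
        (φ.differentiableAt (x := x + t - δ)).hasDerivAt
    have h1' := h1.comp_const_add x t
    have h2' := h2.comp_const_add (x - δ) t
    have h2'' : HasDerivAt (fun t => φ (x + t - δ)) (ψ (x + t - δ)) t := by
      simpa [show ∀ u:ℝ, x - δ + u = x + u - δ by intro u; ring] using h2'
    exact (h1'.sub h2'').hasDerivWithinAt
  have hbound : ∀ t ∈ uIcc (0:ℝ) δ, ‖ψ (x + t) - ψ (x + t - δ)‖ ≤ M * |δ| := by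
    intro t ht
    have h1 : x + t ∈ Icc (x-1) (x+1) := by
      have := hmem t ht
      constructor <;> [linarith [abs_le.1 (this.trans hδ)]; linarith [(abs_le.1 (this.trans hδ)).2]]
    have h2 : x + t - δ ∈ Icc (x-1) (x+1) := by
      have ht' := hmem t ht
      have : |t - δ| ≤ 1 := by
        calc |t - δ| ≤ |t| + |δ| := abs_sub _ _
          _ ≤ 1/2 + 1/2 := add_le_add (ht'.trans hδ) hδ
          _ = 1 := by norm_num
      constructor <;> [linarith [(abs_le.1 this).1]; linarith [(abs_le.1 this).2]]
    calc ‖ψ (x + t) - ψ (x + t - δ)‖ = |ψ (x + t) - ψ (x + t - δ)| := rfl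
      _ ≤ M * |(x + t) - (x + t - δ)| := hlip _ h1 _ h2
      _ = M * |δ| := by congr 1; rw [show (x + t) - (x + t - δ) = δ by ring]
  have hfinal := (convex_uIcc (0:ℝ) δ).norm_image_sub_le_of_norm_hasDerivWithin_le
    hhderiv hbound (left_mem_uIcc) (right_mem_uIcc)
  have heval : h δ - h 0 = φ (x+δ) - 2*φ x + φ (x-δ) := by
    simp only [hhdef, add_zero, add_sub_cancel_right]
    ring
  calc |φ (x+δ) - 2*φ x + φ (x-δ)| = ‖h δ - h 0‖ := by rw [heval]; rfl
    _ ≤ M * |δ| * ‖δ - 0‖ := hfinal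
    _ = δ^2 * M := by
        rw [Real.norm_eq_abs, sub_zero, show M * |δ| * |δ| = |δ| * |δ| * M by ring,
          abs_mul_abs_self, sq]

lemma decay_bound (φ : SchwartzMap ℝ ℝ) :
    ∃ K : ℝ, 0 ≤ K ∧ ∀ ξ : ℝ, 1 ≤ |ξ| →
      ‖FourierTransform.fourier (fun x : ℝ => ((|φ x| : ℝ) : ℂ)) ξ‖ ≤ K / ξ ^ 2 := by
  set ψ' := SchwartzMap.derivCLM ℝ ℝ (SchwartzMap.derivCLM ℝ ℝ φ) with hψ'def
  obtain ⟨C₀, hC₀pos, hC₀⟩ := ψ'.decay 0 0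
  obtain ⟨C₂, hC₂pos, hC₂⟩ := ψ'.decay 2 0
  have hCc : ∀ u, |ψ' u| * (1 + u^2) ≤ C₀ + C₂ := by
    intro u
    have h0 := hC₀ u
    have h2 := hC₂ u
    simp only [norm_iteratedFDeriv_zero, pow_zero, one_mul, Real.norm_eq_abs] at h0 h2
    have : |u|^2 = u^2 := sq_abs u
    nlinarith [abs_nonneg (ψ' u)]
  set Cc := C₀ + C₂ with hCcdef
  have hCc0 : 0 ≤ Cc := by positivity
  set m : ℝ → ℝ := fun x => 3*Cc * (1+x^2)⁻¹ with hmdef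
  have hmint : Integrable m := integrable_inv_one_add_sq.const_mul (3*Cc)
  set K : ℝ := ∫ x : ℝ, m x with hKdef
  have hK0 : 0 ≤ K := integral_nonneg (fun x => by positivity)
  refine ⟨K, hK0, fun ξ hξ => ?_⟩
  have hξ0 : ξ ≠ 0 := fun h => by simp [h] at hξ; linarith
  set δ : ℝ := 1/(2*ξ) with hδdef
  have hδξ : δ * ξ = 1/2 := by rw [hδdef]; field_simp
  have hδabs : |δ| ≤ 1/2 := by
    rw [hδdef, abs_div, abs_mul, abs_one, abs_two, div_le_div_iff₀ (by positivity) (by norm_num)]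
    linarith
  set f : ℝ → ℂ := fun x => ((|φ x| : ℝ) : ℂ) with hfdef
  have hf : Integrable f := (φ.integrable.abs).ofReal
  have hfshift : ∀ c : ℝ, Integrable (fun x => f (x + c)) := fun c => hf.comp_add_right c
  -- fourier of translates
  have hshiftF : ∀ c : ℝ, FourierTransform.fourier (fun v => f (v + c)) ξ
      = (𝐞 (c * ξ) : ℂ) * FourierTransform.fourier f ξ := by
    intro c
    have h := VectorFourier.fourierIntegral_comp_add_right (𝕜 := ℝ) 𝐞 volume (innerₗ ℝ) f c
    have h2 := congrFun h ξ
    simpa [FourierTransform.fourier, RCLike.inner_apply, Circle.smul_def, Function.comp_def, mul_comm c ξ] using h2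
  have hchar1 : (𝐞 (δ * ξ) : ℂ) = -1 := by
    rw [hδξ, Real.fourierChar_apply]
    norm_num
    rw [show (2 * (π:ℂ) * (1 / 2) * Complex.I) = (π * Complex.I) by ring, Complex.exp_pi_mul_I]
  have hchar2 : (𝐞 (-δ * ξ) : ℂ) = -1 := by
    rw [show -δ * ξ = -(δ * ξ) by ring, hδξ, Real.fourierChar_apply]
    norm_num
    rw [show -(2 * (π:ℂ) * (1 / 2) * Complex.I) = -(π * Complex.I) by ring,
      Complex.exp_neg, Complex.exp_pi_mul_I]
    norm_num
  set g : ℝ → ℂ := fun v => f (v + δ) - 2 * f v + f (v + -δ) with hgdef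
  -- linearity of the Fourier integral
  have hI1 : Integrable (fun v : ℝ => (𝐞 (-(inner ℝ v ξ : ℝ)) : ℂ) * f (v + δ)) := by
    have := (Real.fourierIntegral_convergent_iff (f := fun x => f (x + δ)) ξ).2 (hfshift δ)
    simpa [Circle.smul_def] using this
  have hI2 : Integrable (fun v : ℝ => (𝐞 (-(inner ℝ v ξ : ℝ)) : ℂ) * f v) := by
    have := (Real.fourierIntegral_convergent_iff (f := f) ξ).2 hf
    simpa [Circle.smul_def] using this
  have hI3 : Integrable (fun v : ℝ => (𝐞 (-(inner ℝ v ξ : ℝ)) : ℂ) * f (v + -δ)) := by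
    have := (Real.fourierIntegral_convergent_iff (f := fun x => f (x + -δ)) ξ).2 (hfshift (-δ))
    simpa [Circle.smul_def] using this
  have hgF : FourierTransform.fourier g ξ = -4 * FourierTransform.fourier f ξ := by
    have hexp : FourierTransform.fourier g ξ
        = ∫ v : ℝ, ((𝐞 (-(inner ℝ v ξ : ℝ)) : ℂ) * f (v + δ)
            - 2 * ((𝐞 (-(inner ℝ v ξ : ℝ)) : ℂ) * f v)
            + (𝐞 (-(inner ℝ v ξ : ℝ)) : ℂ) * f (v + -δ)) := by
      rw [Real.fourier_eq]
      congr 1; funext v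
      simp only [hgdef, Circle.smul_def, smul_eq_mul]
      ring
    have hsub : Integrable (fun v : ℝ => (𝐞 (-(inner ℝ v ξ : ℝ)) : ℂ) * f (v + δ)
        - 2 * ((𝐞 (-(inner ℝ v ξ : ℝ)) : ℂ) * f v)) := hI1.sub (hI2.const_mul 2)
    rw [hexp, integral_add hsub hI3, integral_sub hI1 (hI2.const_mul 2),
      integral_const_mul]
    have e1 : (∫ v : ℝ, (𝐞 (-(inner ℝ v ξ : ℝ)) : ℂ) * f (v + δ))
        = FourierTransform.fourier (fun v => f (v + δ)) ξ := by
      rw [Real.fourier_eq]; simp [Circle.smul_def]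
    have e2 : (∫ v : ℝ, (𝐞 (-(inner ℝ v ξ : ℝ)) : ℂ) * f v)
        = FourierTransform.fourier f ξ := by
      rw [Real.fourier_eq]; simp [Circle.smul_def]
    have e3 : (∫ v : ℝ, (𝐞 (-(inner ℝ v ξ : ℝ)) : ℂ) * f (v + -δ))
        = FourierTransform.fourier (fun v => f (v + -δ)) ξ := by
      rw [Real.fourier_eq]; simp [Circle.smul_def]
    rw [e1, e2, e3, hshiftF δ, hshiftF (-δ), hchar1, hchar2]
    ring
  -- now the norm estimates
  have hgnorm : ‖FourierTransform.fourier g ξ‖ = 4 * ‖FourierTransform.fourier f ξ‖ := by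
    rw [hgF, norm_mul]
    norm_num
  have hg1 : ‖FourierTransform.fourier g ξ‖ ≤ ∫ v, ‖g v‖ :=
    VectorFourier.norm_fourierIntegral_le_integral_norm 𝐞 volume (innerₗ ℝ) g ξ
  set r : ℝ → ℝ := fun v => |φ (v + δ)| - 2*|φ v| + |φ (v + -δ)| with hrdef
  set Δ : ℝ → ℝ := fun v => φ (v + δ) - 2*(φ v) + φ (v + -δ) with hΔdef
  have hgr : ∀ v, ‖g v‖ = |r v| := by
    intro v
    have : g v = ((r v : ℝ) : ℂ) := by simp only [hgdef, hrdef, hfdef]; push_cast; ring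
    rw [this, Complex.norm_real, Real.norm_eq_abs]
  have habs_tr : ∀ v, |r v| ≤ r v + 2*|Δ v| := fun v =>
    abs_trick (φ (v + δ)) (φ v) (φ (v + -δ))
  have hΔint : Integrable (fun v => |Δ v|) :=
    (((φ.integrable.comp_add_right δ).sub (φ.integrable.const_mul 2)).add
      (φ.integrable.comp_add_right (-δ))).abs
  have hrint : Integrable r :=
    ((φ.integrable.abs.comp_add_right δ).sub ((φ.integrable.abs).const_mul 2)).add
      (φ.integrable.abs.comp_add_right (-δ))
  have hstep1 : (∫ v, ‖g v‖) ≤ ∫ v, (r v + 2*|Δ v|) := by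
    refine integral_mono_of_nonneg (Filter.Eventually.of_forall fun v => norm_nonneg _)
      (hrint.add (hΔint.const_mul 2)) (Filter.Eventually.of_forall fun v => ?_)
    simp only []
    rw [hgr v]; exact habs_tr v
  have hstep3 : (∫ v, r v) = 0 := by
    have hsubr : Integrable (fun v : ℝ => |φ (v + δ)| - 2*|φ v|) :=
      (φ.integrable.abs.comp_add_right δ).sub ((φ.integrable.abs).const_mul 2)
    rw [hrdef]
    rw [integral_add hsubr (φ.integrable.abs.comp_add_right (-δ)),
      integral_sub (φ.integrable.abs.comp_add_right δ) ((φ.integrable.abs).const_mul 2),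
      integral_const_mul,
      integral_add_right_eq_self (fun x => |φ x|) δ,
      integral_add_right_eq_self (fun x => |φ x|) (-δ)]
    ring
  have hstep4 : (∫ v, |Δ v|) ≤ δ^2 * K := by
    have hpt : ∀ v, |Δ v| ≤ δ^2 * m v := by
      intro v
      have := sd_pointwise φ Cc hCc δ v hδabs
      rw [sub_eq_add_neg v δ] at this
      exact this
    calc (∫ v, |Δ v|) ≤ ∫ v, δ^2 * m v :=
          integral_mono_of_nonneg (Filter.Eventually.of_forall fun v => abs_nonneg _)
            (hmint.const_mul (δ^2)) (Filter.Eventually.of_forall hpt)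
      _ = δ^2 * K := by rw [integral_const_mul]
  have hsum : (∫ v, (r v + 2*|Δ v|)) ≤ 2*(δ^2*K) := by
    rw [integral_add hrint (hΔint.const_mul 2), integral_const_mul, hstep3]
    linarith
  have hξsq : (0:ℝ) < ξ^2 := by positivity
  have hδsq : δ^2 = 1/(4*ξ^2) := by rw [hδdef]; field_simp; ring
  have hfin : 2*(δ^2*K)/4 ≤ K/ξ^2 := by
    rw [hδsq, show 2*((1/(4*ξ^2))*K)/4 = K/(8*ξ^2) by field_simp; ring]
    exact div_le_div_of_nonneg_left hK0 hξsq (by nlinarith)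
  calc ‖FourierTransform.fourier f ξ‖ = ‖FourierTransform.fourier g ξ‖/4 := by rw [hgnorm]; ring
    _ ≤ (∫ v, ‖g v‖)/4 := by linarith
    _ ≤ (2*(δ^2*K))/4 := by linarith [hstep1.trans hsum]
    _ ≤ K/ξ^2 := hfin

lemma part1 (φ : SchwartzMap ℝ ℝ) :
    Integrable (FourierTransform.fourier (fun x : ℝ => ((|φ x| : ℝ) : ℂ))) volume := by
  obtain ⟨K, hK0, hK⟩ := decay_bound φ
  set f : ℝ → ℂ := fun x => ((|φ x| : ℝ) : ℂ) with hfdef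
  have hf : Integrable f := (φ.integrable.abs).ofReal
  have hcont : Continuous (FourierTransform.fourier f) :=
    VectorFourier.fourierIntegral_continuous Real.continuous_fourierChar continuous_inner hf
  set B : ℝ := ∫ v, ‖f v‖ with hBdef
  have hB0 : 0 ≤ B := integral_nonneg fun v => norm_nonneg _
  have hBd : ∀ ξ, ‖FourierTransform.fourier f ξ‖ ≤ B := fun ξ =>
    VectorFourier.norm_fourierIntegral_le_integral_norm 𝐞 volume (innerₗ ℝ) f ξ
  have hbound : ∀ ξ : ℝ, ‖FourierTransform.fourier f ξ‖ ≤ (2*B + 2*K) * (1 + ξ^2)⁻¹ := by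
    intro ξ
    have hpos : (0:ℝ) < 1 + ξ^2 := by positivity
    rcases le_total (|ξ|) 1 with hc | hc
    · have h2 : 1 + ξ^2 ≤ 2 := by nlinarith [sq_abs ξ, abs_nonneg ξ]
      have hinv : (1/2 : ℝ) ≤ (1+ξ^2)⁻¹ := by
        rw [← one_div, div_le_div_iff₀ (by norm_num) hpos]
        linarith
      refine (hBd ξ).trans ?_
      nlinarith [hinv, hB0, hK0]
    · refine (hK ξ hc).trans ?_
      have hξsq : (1:ℝ) ≤ ξ^2 := by nlinarith [sq_abs ξ]
      rw [← div_eq_mul_inv, div_le_div_iff₀ (by positivity) hpos]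
      nlinarith
  exact (integrable_inv_one_add_sq.const_mul (2*B+2*K)).mono' hcont.aestronglyMeasurable
    (Filter.Eventually.of_forall hbound)

end Aux

/-- For a Schwartz function `φ` on `ℝ`, the Fourier transform of `|φ|` is integrable;
moreover `∑_{s ∈ N} |φ'(s)| ≤ ∫ |φ''| < ∞` where `N` is the set of zeros of `φ` with
nonvanishing derivative, and `|ℱ|φ|(ξ)| ≲ |ξ|⁻²` for large `|ξ|`. -/
theorem stmt_0 (φ : SchwartzMap ℝ ℝ) :
    Integrable (FourierTransform.fourier (fun x : ℝ => ((|φ x| : ℝ) : ℂ))) volume ∧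
    Integrable (fun s : ℝ => deriv (deriv (⇑φ)) s) volume ∧
    (∑' s : {s : ℝ // φ s = 0 ∧ deriv (⇑φ) s ≠ 0}, |deriv (⇑φ) (s : ℝ)|) ≤
      (∫ s : ℝ, |deriv (deriv (⇑φ)) s|) ∧
    (∃ C R : ℝ, 0 < C ∧ ∀ ξ : ℝ, R ≤ |ξ| →
      ‖FourierTransform.fourier (fun x : ℝ => ((|φ x| : ℝ) : ℂ)) ξ‖ ≤ C / ξ ^ 2) := by
  refine ⟨part1 φ, ?_, part3 φ, ?_⟩
  · have hd2 : deriv (deriv ⇑φ) = ⇑(SchwartzMap.derivCLM ℝ ℝ (SchwartzMap.derivCLM ℝ ℝ φ)) := by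
      rw [my_deriv_eq φ]; exact my_deriv_eq _
    have : (fun s : ℝ => deriv (deriv (⇑φ)) s) = deriv (deriv (⇑φ)) := rfl
    rw [this, hd2]
    exact (SchwartzMap.derivCLM ℝ ℝ (SchwartzMap.derivCLM ℝ ℝ φ)).integrable
  · obtain ⟨K, hK0, hK⟩ := decay_bound φ
    refine ⟨K + 1, 1, by linarith, fun ξ hξ => (hK ξ hξ).trans ?_⟩
    have hξsq : (0:ℝ) < ξ^2 := by
      have : ξ ≠ 0 := fun h => by simp [h] at hξ; linarith
      positivity
    exact (div_le_div_iff_of_pos_right hξsq).2 (by linarith)
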